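/- Let k be an algebraically closed field of characteristic χ > 0, let f = (f_1,...,f_m) ∈ k[t_1,...,t_n]^m induce a surjective map k^n → k^m, and let h : k^m → k be any function such that h ∘ f is a polynomial function. Then there exists ν ∈ ℕ₀ such that the function (y_1,...,y_m) ↦ h(y_1,...,y_m)^(χ^ν) is a polynomial function on k^m. -/

import Mathlib

open MvPolynomial

/-- `p` vanishes at every point of `A`. -/
def VanishesOn {k : Type*} [CommSemiring k] {m : ℕ} (A : Set (Fin m → k))
    (p : MvPolynomial (Fin m) k) : Prop :=
  ∀ a ∈ A, eval a p = 0

/-- The Zariski closure of `A ⊆ k^m` has dimension at most `d` (with `dim ∅ = -1`):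
for every index set `S` with more than `d` elements, the vanishing ideal of `A`
contains a nonzero polynomial supported on the variables in `S`. -/
def ZClosureDimLE {k : Type*} [CommSemiring k] {m : ℕ} (A : Set (Fin m → k)) (d : ℤ) : Prop :=
  ∀ S : Finset (Fin m), d < (S.card : ℤ) →
    ∃ p : MvPolynomial (Fin m) k, p ≠ 0 ∧
      p ∈ MvPolynomial.supported k (↑S : Set (Fin m)) ∧ VanishesOn A p

/-- The range of the polynomial map `k^n → k^m` induced by `f`. -/
def polyRange {k : Type*} [CommSemiring k] {m n : ℕ}
    (f : Fin m → MvPolynomial (Fin n) k) : Set (Fin m → k) :=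
  Set.range fun a : Fin n → k => fun i => eval a (f i)

/-- `f` is almost surjective on `k`: the Zariski closure of the complement of the range
of the induced map `k^n → k^m` has dimension at most `m - 2`. -/
def AlmostSurj {k : Type*} [CommSemiring k] {m n : ℕ}
    (f : Fin m → MvPolynomial (Fin n) k) : Prop :=
  ZClosureDimLE (polyRange f)ᶜ ((m : ℤ) - 2)

/-- `g` is determined by `f`. -/
def Determined {k : Type*} [CommSemiring k] {m n : ℕ}
    (f : Fin m → MvPolynomial (Fin n) k) (g : MvPolynomial (Fin n) k) : Prop :=
  ∀ a b : Fin n → k, (∀ i, eval a (f i) = eval b (f i)) → eval a g = eval b g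

private lemma evalAeval {k : Type*} [CommSemiring k] {n m : ℕ}
    (a : Fin n → k) (f : Fin m → MvPolynomial (Fin n) k) (Q : MvPolynomial (Fin m) k) :
    eval a (aeval f Q) = eval (fun i => eval a (f i)) Q := by
  induction Q using MvPolynomial.induction_on with
  | C c => simp
  | add p q hp hq => simp only [map_add, hp, hq]
  | mul_X p i hp => simp only [map_mul, aeval_X, eval_X, hp]

open TensorProduct in
private lemma tmul_comm_mem_range {K L : Type*} [Field K] [Field L] [Algebra K L] (u : L)
    (h : u ⊗ₜ[K] (1 : L) = (1 : L) ⊗ₜ[K] u) : ∃ w : K, algebraMap K L w = u := by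
  by_contra hc
  push_neg at hc
  have h1m : (1 : L) ∈ ({1} : Set L) := rfl
  have hunr : u ∉ Submodule.span K ({1} : Set L) := by
    intro hu
    obtain ⟨c, hcu⟩ := Submodule.mem_span_singleton.1 hu
    exact hc c (by rw [Algebra.algebraMap_eq_smul_one]; exact hcu)
  have hne : u ∉ ({1} : Set L) := by
    intro e
    rw [Set.mem_singleton_iff] at e
    rw [e] at hunr; exact hunr (Submodule.subset_span h1m)
  have hind : LinearIndepOn K id (insert u {1} : Set L) := by
    rw [linearIndepOn_id_insert hne]
    exact ⟨(linearIndepOn_singleton_iff K).mpr one_ne_zero, hunr⟩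
  let b := Module.Basis.extend hind
  have hus : u ∈ hind.extend (Set.subset_univ _) :=
    hind.subset_extend _ (Set.mem_insert _ _)
  have h1s : (1 : L) ∈ hind.extend (Set.subset_univ _) :=
    hind.subset_extend _ (Set.mem_insert_of_mem _ rfl)
  let B2 := Module.Basis.tensorProduct b b
  have key : B2 (⟨u, hus⟩, ⟨1, h1s⟩) = B2 (⟨1, h1s⟩, ⟨u, hus⟩) := by
    rw [Module.Basis.tensorProduct_apply, Module.Basis.tensorProduct_apply,
      Module.Basis.extend_apply_self, Module.Basis.extend_apply_self]
    exact h
  have h2 := B2.injective key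
  have h3 : u = (1 : L) := congrArg Subtype.val (congrArg Prod.fst h2)
  exact hc 1 (by rw [map_one, ← h3])

private lemma stepA {k : Type*} [Field k] [IsAlgClosed k] {m n : ℕ}
    (f : Fin m → MvPolynomial (Fin n) k)
    (h : (Fin m → k) → k) (g : MvPolynomial (Fin n) k)
    (hcomp : ∀ a : Fin n → k, h (fun i => eval a (f i)) = eval a g) :
    ∃ N, (rename Sum.inl g - rename Sum.inr g) ^ N ∈
      Ideal.span (Set.range fun i =>
        (rename Sum.inl (f i) - rename Sum.inr (f i) : MvPolynomial (Fin n ⊕ Fin n) k)) := by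
  set I : Ideal (MvPolynomial (Fin n ⊕ Fin n) k) :=
    Ideal.span (Set.range fun i => rename Sum.inl (f i) - rename Sum.inr (f i)) with hI
  have hd : (rename Sum.inl g - rename Sum.inr g) ∈ I.radical := by
    rw [← vanishingIdeal_zeroLocus_eq_radical (K := k)]
    intro x hx
    rw [aeval_eq_eval]
    have hfi : ∀ i, eval (x ∘ Sum.inl) (f i) = eval (x ∘ Sum.inr) (f i) := by
      intro i
      have h0 := hx _ (Ideal.subset_span ⟨i, rfl⟩)
      rw [aeval_eq_eval] at h0
      rw [map_sub, sub_eq_zero, eval_rename, eval_rename] at h0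
      exact h0
    have hFF : (fun i => eval (x ∘ Sum.inl) (f i)) = fun i => eval (x ∘ Sum.inr) (f i) :=
      funext hfi
    have hgg := congrArg h hFF
    rw [hcomp, hcomp] at hgg
    rw [map_sub, sub_eq_zero, eval_rename, eval_rename]
    exact hgg
  exact Ideal.mem_radical_iff.1 hd

set_option maxHeartbeats 1200000 in
set_option synthInstance.maxHeartbeats 400000 in
private lemma stepC {k : Type*} [Field k] {m n : ℕ}
    (f : Fin m → MvPolynomial (Fin n) k) (u : MvPolynomial (Fin n) k)
    (hφinj : Function.Injective (aeval f : MvPolynomial (Fin m) k →ₐ[k] MvPolynomial (Fin n) k))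
    (hu : rename Sum.inl u - rename Sum.inr u ∈
      Ideal.span (Set.range fun i =>
        (rename Sum.inl (f i) - rename Sum.inr (f i) : MvPolynomial (Fin n ⊕ Fin n) k))) :
    ∃ P Q : MvPolynomial (Fin m) k, Q ≠ 0 ∧ u * aeval f Q = aeval f P := by
  classical
  let L := FractionRing (MvPolynomial (Fin n) k)
  let K := FractionRing (MvPolynomial (Fin m) k)
  let ι : MvPolynomial (Fin n) k →+* L := algebraMap (MvPolynomial (Fin n) k) L
  have hιinj : Function.Injective ι := IsFractionRing.injective (MvPolynomial (Fin n) k) L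
  have hψ0inj : Function.Injective
      ⇑(ι.comp (aeval f : MvPolynomial (Fin m) k →ₐ[k] MvPolynomial (Fin n) k).toRingHom) :=
    fun a b hab => hφinj (hιinj hab)
  let ψ : K →+* L := IsFractionRing.lift hψ0inj
  letI : Algebra K L := ψ.toAlgebra
  have hψmap : ∀ x : MvPolynomial (Fin m) k,
      ψ (algebraMap (MvPolynomial (Fin m) k) K x) = ι (aeval f x) :=
    fun x => IsFractionRing.lift_algebraMap hψ0inj x
  have htmul : ∀ w : K, (ψ w) ⊗ₜ[K] (1 : L) = (1 : L) ⊗ₜ[K] (ψ w) := by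
    intro w
    have hsm : ψ w = w • (1 : L) := by
      rw [← Algebra.algebraMap_eq_smul_one]; rfl
    rw [hsm, TensorProduct.smul_tmul, TensorProduct.tmul_smul]
  let c : k →+* TensorProduct K L L := (algebraMap L (TensorProduct K L L)).comp (algebraMap k L)
  let v : (Fin n ⊕ Fin n) → TensorProduct K L L :=
    Sum.elim (fun j => ι (X j) ⊗ₜ[K] 1) (fun j => 1 ⊗ₜ[K] ι (X j))
  have hCL : ∀ a : k, ι (C a) = algebraMap k L a := by
    intro a
    rw [show (C a : MvPolynomial (Fin n) k) = algebraMap k _ a from rfl,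
      ← IsScalarTower.algebraMap_apply]
  have hΨ1 : ∀ p : MvPolynomial (Fin n) k,
      eval₂Hom c v (rename Sum.inl p) = ι p ⊗ₜ[K] 1 := by
    intro p
    induction p using MvPolynomial.induction_on with
    | C a => rw [rename_C, eval₂Hom_C, hCL]; rfl
    | add p q hp hq => rw [map_add, map_add, hp, hq, map_add, ← TensorProduct.add_tmul]
    | mul_X p i hp =>
        rw [map_mul, map_mul, hp, rename_X, eval₂Hom_X', map_mul]
        show ι p ⊗ₜ[K] (1:L) * (ι (X i) ⊗ₜ[K] (1:L)) = (ι p * ι (X i)) ⊗ₜ[K] (1:L)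
        rw [Algebra.TensorProduct.tmul_mul_tmul, mul_one]
  have hΨ2 : ∀ p : MvPolynomial (Fin n) k,
      eval₂Hom c v (rename Sum.inr p) = 1 ⊗ₜ[K] ι p := by
    intro p
    induction p using MvPolynomial.induction_on with
    | C a =>
        rw [rename_C, eval₂Hom_C]
        have h1 : ι (C a) = ψ (algebraMap (MvPolynomial (Fin m) k) K (C a)) := by
          rw [hψmap, aeval_C]; rfl
        calc c a = ι (C a) ⊗ₜ[K] 1 := by rw [hCL]; rfl
        _ = 1 ⊗ₜ[K] ι (C a) := by rw [h1]; exact htmul _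
    | add p q hp hq => rw [map_add, map_add, hp, hq, map_add, ← TensorProduct.tmul_add]
    | mul_X p i hp =>
        rw [map_mul, map_mul, hp, rename_X, eval₂Hom_X', map_mul]
        show (1:L) ⊗ₜ[K] ι p * ((1:L) ⊗ₜ[K] ι (X i)) = (1:L) ⊗ₜ[K] (ι p * ι (X i))
        rw [Algebra.TensorProduct.tmul_mul_tmul, mul_one]
  have hker : Ideal.span (Set.range fun i =>
      (rename Sum.inl (f i) - rename Sum.inr (f i) : MvPolynomial (Fin n ⊕ Fin n) k)) ≤
      RingHom.ker (eval₂Hom c v) := by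
    rw [Ideal.span_le]
    rintro _ ⟨i, rfl⟩
    have hfi : ι (f i) = ψ (algebraMap (MvPolynomial (Fin m) k) K (X i)) := by
      rw [hψmap, aeval_X]
    rw [SetLike.mem_coe, RingHom.mem_ker, map_sub, hΨ1, hΨ2, hfi, htmul, sub_self]
  have hten : ι u ⊗ₜ[K] 1 = 1 ⊗ₜ[K] ι u := by
    have h0 := hker hu
    rw [RingHom.mem_ker, map_sub, hΨ1, hΨ2, sub_eq_zero] at h0
    exact h0
  obtain ⟨w, hw⟩ := tmul_comm_mem_range (K := K) (ι u) hten
  obtain ⟨P, Q, hQ, hwPQ⟩ := IsFractionRing.div_surjective (A := MvPolynomial (Fin m) k) w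
  have hQ0 : (Q : MvPolynomial (Fin m) k) ≠ 0 := nonZeroDivisors.ne_zero hQ
  refine ⟨P, Q, hQ0, hιinj ?_⟩
  have hψw : ψ w = ι u := hw
  rw [← hwPQ, map_div₀, hψmap, hψmap] at hψw
  have hφQ0 : ι (aeval f Q) ≠ 0 := fun e => hQ0 (hφinj (hιinj (by rw [e, map_zero, map_zero])))
  rw [div_eq_iff hφQ0] at hψw
  rw [map_mul]
  exact hψw.symm

theorem stmt18 {k : Type*} [Field k] [IsAlgClosed k] (χ : ℕ) [CharP k χ] (hχ : 0 < χ)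
    {m n : ℕ} (f : Fin m → MvPolynomial (Fin n) k)
    (hsurj : Function.Surjective fun a : Fin n → k => fun i => eval a (f i))
    (h : (Fin m → k) → k) (g : MvPolynomial (Fin n) k)
    (hcomp : ∀ a : Fin n → k, h (fun i => eval a (f i)) = eval a g) :
    ∃ ν : ℕ, ∃ p : MvPolynomial (Fin m) k, ∀ b : Fin m → k, h b ^ χ ^ ν = eval b p := by
  classical
  have hprime : χ.Prime := (CharP.char_is_prime_or_zero k χ).resolve_right (by omega)
  haveI : Fact χ.Prime := ⟨hprime⟩
  have hφinj : Function.Injective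
      (aeval f : MvPolynomial (Fin m) k →ₐ[k] MvPolynomial (Fin n) k) := by
    intro p q hpq
    apply MvPolynomial.funext
    intro b
    obtain ⟨a, ha⟩ := hsurj b
    rw [← ha, ← evalAeval, ← evalAeval, hpq]
  obtain ⟨N, hN⟩ := stepA f h g hcomp
  set q := χ ^ N with hqdef
  have hNq : N ≤ q := (Nat.lt_pow_self (n := N) hprime.one_lt).le
  have hfrob : rename Sum.inl (g ^ q) - rename Sum.inr (g ^ q) ∈
      Ideal.span (Set.range fun i =>
        (rename Sum.inl (f i) - rename Sum.inr (f i) : MvPolynomial (Fin n ⊕ Fin n) k)) := by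
    have h1 : (rename Sum.inl g - rename Sum.inr g) ^ q ∈
        Ideal.span (Set.range fun i =>
          (rename Sum.inl (f i) - rename Sum.inr (f i) : MvPolynomial (Fin n ⊕ Fin n) k)) := by
      rw [show q = N + (q - N) by omega, pow_add]
      exact Ideal.mul_mem_right _ _ hN
    rw [hqdef, sub_pow_char_pow, ← map_pow, ← map_pow] at h1
    exact h1
  obtain ⟨P, Q, hQ0, hPQ⟩ := stepC f (g ^ q) hφinj hfrob
  obtain ⟨Q', P', cf, hrel, hQ', hP'⟩ :=
    UniqueFactorizationMonoid.exists_reduced_factors Q hQ0 P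
  have hcf0 : cf ≠ 0 := fun e => hQ0 (by rw [← hQ', e, zero_mul])
  have hφcf0 : (aeval f cf : MvPolynomial (Fin n) k) ≠ 0 := fun e =>
    hcf0 (hφinj (by rw [e, map_zero]))
  have hcan : g ^ q * aeval f Q' = aeval f P' := by
    apply mul_left_cancel₀ hφcf0
    calc (aeval f cf : MvPolynomial (Fin n) k) * (g ^ q * aeval f Q')
        = g ^ q * aeval f (cf * Q') := by rw [map_mul]; ring
      _ = aeval f cf * aeval f P' := by rw [hQ', hPQ, ← hP', map_mul]
  have hpt : ∀ b : Fin m → k, h b ^ q * eval b Q' = eval b P' := by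
    intro b
    obtain ⟨a, ha⟩ := hsurj b
    have hb : h b = eval a g := by rw [← ha]; exact hcomp a
    have hev := congrArg (eval a) hcan
    rw [map_mul, map_pow, evalAeval, evalAeval] at hev
    rw [hb, ← ha]
    exact hev
  have hQ'0 : Q' ≠ 0 := fun e => hQ0 (by rw [← hQ', e, mul_zero])
  have hQunit : IsUnit Q' := by
    by_contra hQu
    obtain ⟨r, hirr, hdvd⟩ := WfDvdMonoid.exists_irreducible_factor hQu hQ'0
    have hpr : Prime r := UniqueFactorizationMonoid.irreducible_iff_prime.mp hirr
    have hrP : r ∣ P' := by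
      have hVP : P' ∈ vanishingIdeal k (zeroLocus k (Ideal.span {r})) := by
        intro x hx
        have hrx : eval x r = 0 := hx r (Ideal.subset_span rfl)
        obtain ⟨s, hs⟩ := hdvd
        have hQx : eval x Q' = 0 := by rw [hs, map_mul, hrx, zero_mul]
        rw [aeval_eq_eval, ← hpt x, hQx, mul_zero]
      rw [vanishingIdeal_zeroLocus_eq_radical,
        ((Ideal.span_singleton_prime hpr.ne_zero).mpr hpr).radical,
        Ideal.mem_span_singleton] at hVP
      exact hVP
    exact hirr.not_isUnit (hrel hdvd hrP)
  obtain ⟨vQ, hvQ⟩ := hQunit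
  refine ⟨N, (↑vQ⁻¹ : MvPolynomial (Fin m) k) * P', fun b => ?_⟩
  have hone : eval b (↑vQ⁻¹ : MvPolynomial (Fin m) k) * eval b (↑vQ : MvPolynomial (Fin m) k)
      = 1 := by rw [← map_mul, Units.inv_mul, map_one]
  rw [map_mul, ← hpt b, ← hvQ]
  calc h b ^ χ ^ N
      = h b ^ q * (eval b (↑vQ⁻¹ : MvPolynomial (Fin m) k) *
        eval b (↑vQ : MvPolynomial (Fin m) k)) := by rw [hone, mul_one]
    _ = eval b (↑vQ⁻¹ : MvPolynomial (Fin m) k) *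
        (h b ^ q * eval b (↑vQ : MvPolynomial (Fin m) k)) := by ring
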